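/- Let A be a Noetherian integral domain and let φ : N → M be an injective homomorphism of finitely generated A-modules. Then there exists a nonzero element f ∈ A such that for every maximal ideal 𝔪 of A with f ∉ 𝔪, the induced map of fibers N ⊗_A A/𝔪 → M ⊗_A A/𝔪 (equivalently N/𝔪N → M/𝔪M) is injective. -/
import Mathlib

/-- let `A` be a Noetherian integral domain and `φ : N → M` an
injective homomorphism of finitely generated `A`-modules.  Then there is a nonzero
`f ∈ A` such that for every maximal ideal `𝔪` with `f ∉ 𝔪`, the induced map of fibers
`N ⊗_A A/𝔪 → M ⊗_A A/𝔪` is injective. -/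
theorem generic_injectivity_of_fibers (A : Type*) [CommRing A] [IsDomain A]
    [IsNoetherianRing A]
    (N M : Type*) [AddCommGroup N] [Module A N] [AddCommGroup M] [Module A M]
    [Module.Finite A N] [Module.Finite A M]
    (φ : N →ₗ[A] M) (hφ : Function.Injective φ) :
    ∃ f : A, f ≠ 0 ∧ ∀ 𝔪 : Ideal A, 𝔪.IsMaximal → f ∉ 𝔪 →
      Function.Injective (LinearMap.rTensor (A ⧸ 𝔪) φ) := by
  classical
  -- Step 1: find `ψ : M →ₗ[A] N` and a nonzero `f` with `ψ ∘ φ = f • id`.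
  obtain ⟨f, hf, ψ, hψφ⟩ :
      ∃ f : A, f ≠ 0 ∧ ∃ ψ : M →ₗ[A] N, ψ ∘ₗ φ = f • (LinearMap.id : N →ₗ[A] N) := by
    set S := nonZeroDivisors A
    set K := Localization S with hK
    letI : Field K := inferInstanceAs (Field (FractionRing A))
    set fN := LocalizedModule.mkLinearMap S N with hfN
    set fM := LocalizedModule.mkLinearMap S M with hfM
    set φ' : LocalizedModule S N →ₗ[A] LocalizedModule S M :=
      IsLocalizedModule.map S fN fM φ with hφ'def
    have hφ' : Function.Injective φ' := IsLocalizedModule.map_injective S fN fM φ hφ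
    set φK : LocalizedModule S N →ₗ[K] LocalizedModule S M :=
      LinearMap.extendScalarsOfIsLocalization S K φ' with hφKdef
    have hφK : Function.Injective φK := hφ'
    obtain ⟨r, hr⟩ := φK.exists_leftInverse_of_injective (LinearMap.ker_eq_bot.mpr hφK)
    haveI : Module.FinitePresentation A M := Module.finitePresentation_of_finite A M
    obtain ⟨ψ, s, hψ⟩ := Module.FinitePresentation.exists_lift_of_isLocalizedModule S fN
      ((r.restrictScalars A) ∘ₗ fM)
    have key : fN ∘ₗ (ψ ∘ₗ φ) = fN ∘ₗ ((s : A) • (LinearMap.id : N →ₗ[A] N)) := by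
      ext x
      have h1 := LinearMap.congr_fun hψ (φ x)
      simp only [LinearMap.comp_apply, LinearMap.smul_apply,
        LinearMap.restrictScalars_apply] at h1 ⊢
      rw [h1]
      have h2 : fM (φ x) = φK (fN x) := (IsLocalizedModule.map_apply S fN fM φ x).symm
      have h3 : r (φK (fN x)) = fN x := LinearMap.congr_fun hr (fN x)
      rw [h2, h3, LinearMap.id_apply, map_smul]
      rfl
    obtain ⟨t, ht⟩ := Module.Finite.exists_smul_of_comp_eq_of_isLocalizedModule S fN
      (ψ ∘ₗ φ) ((s : A) • (LinearMap.id : N →ₗ[A] N)) key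
    refine ⟨(t : A) * (s : A),
      mul_ne_zero (nonZeroDivisors.ne_zero t.2) (nonZeroDivisors.ne_zero s.2),
      (t : A) • ψ, ?_⟩
    have ht' : (t : A) • (ψ ∘ₗ φ) = (t : A) • ((s : A) • (LinearMap.id : N →ₗ[A] N)) := ht
    rw [LinearMap.smul_comp, ht', smul_smul]
  -- Step 2: for every maximal `𝔪` avoiding `f`, the induced map on fibers is injective.
  refine ⟨f, hf, fun 𝔪 h𝔪 hf𝔪 => ?_⟩
  -- Elements of `𝔪` act as zero on `N ⊗ A/𝔪`.
  have hsmul : ∀ a ∈ 𝔪, ∀ x : TensorProduct A N (A ⧸ 𝔪), a • x = 0 := by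
    intro a ha x
    induction x using TensorProduct.induction_on with
    | zero => simp
    | tmul n q =>
      rw [← TensorProduct.tmul_smul, Algebra.smul_def, Ideal.Quotient.algebraMap_eq,
        (Ideal.Quotient.eq_zero_iff_mem).mpr ha, zero_mul, TensorProduct.tmul_zero]
    | add x y hx hy => rw [smul_add, hx, hy, add_zero]
  obtain ⟨c, hc⟩ : ∃ c : A, c * f - 1 ∈ 𝔪 := by
    obtain ⟨c, z, hz, h1⟩ := h𝔪.exists_inv hf𝔪
    exact ⟨c, by rw [show c * f - 1 = -z by rw [← h1]; ring]; exact 𝔪.neg_mem hz⟩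
  have main : ∀ x : TensorProduct A N (A ⧸ 𝔪),
      LinearMap.rTensor (A ⧸ 𝔪) φ x = 0 → x = 0 := by
    intro x hx
    have h1 : LinearMap.rTensor (A ⧸ 𝔪) (ψ ∘ₗ φ) x = 0 := by
      rw [LinearMap.rTensor_comp, LinearMap.comp_apply, hx, map_zero]
    rw [hψφ] at h1
    have h2 : f • x = 0 := by
      rwa [LinearMap.rTensor_smul, LinearMap.smul_apply, LinearMap.rTensor_id,
        LinearMap.id_apply] at h1
    calc x = (c * f) • x - (c * f - 1) • x := by
            rw [sub_smul, one_smul, sub_sub_cancel]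
      _ = 0 := by
            rw [mul_smul, h2, smul_zero, hsmul _ hc x, sub_zero]
  intro x y hxy
  have := main (x - y) (by rw [map_sub, hxy, sub_self])
  exact sub_eq_zero.mp this
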